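/- Let X be a real normed space, fix real numbers α, η, β with 1 < α < η < β and a constant C > 0, and let N, A, B : X → ℝ be Fréchet differentiable on X, positively homogeneous of degrees η, α, β respectively (N(su) = s^η N(u), A(su) = s^α A(u), B(su) = s^β B(u) for all s > 0, u ∈ X), and satisfy N(u) ≥ C⁻¹‖u‖^η for all u ∈ X. Define Φ_λ(u) = N(u)/η − λ·A(u)/α − B(u)/β. If c < 0, λ ∈ ℝ and u ∈ X satisfy Φ_λ(u) = c and Φ_λ′(u) = 0 (vanishing Fréchet derivative), then u ≠ 0 and λ·A(u) > 0. -/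

import Mathlib

lemma euler_id {X : Type*} [NormedAddCommGroup X] [NormedSpace ℝ X]
    (f : X → ℝ) (d : ℝ) (hf : Differentiable ℝ f)
    (hh : ∀ s : ℝ, 0 < s → ∀ u : X, f (s • u) = s ^ d * f u) (u : X) :
    fderiv ℝ f u u = d * f u := by
  have h1 : HasDerivAt (fun s : ℝ => s • u) u 1 := by
    simpa using (hasDerivAt_id (1:ℝ)).smul_const u
  have h2 : HasDerivAt (fun s : ℝ => f (s • u)) (fderiv ℝ f u u) 1 := by
    have := (hf ((1:ℝ) • u)).hasFDerivAt.comp_hasDerivAt 1 h1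
    simp only [one_smul] at this
    exact this
  have h3 : HasDerivAt (fun s : ℝ => s ^ d * f u) (d * f u) 1 := by
    have := (Real.hasDerivAt_rpow_const (p := d) (x := (1:ℝ)) (Or.inl one_ne_zero)).mul_const (f u)
    simpa using this
  have heq : (fun s : ℝ => f (s • u)) =ᶠ[nhds (1:ℝ)] fun s : ℝ => s ^ d * f u := by
    filter_upwards [eventually_gt_nhds (by norm_num : (0:ℝ) < 1)] with s hs
    exact hh s hs u
  exact (h2.congr_of_eventuallyEq heq.symm).unique h3

lemma hom_zero {X : Type*} [NormedAddCommGroup X] [NormedSpace ℝ X]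
    (f : X → ℝ) (d : ℝ) (hd : 1 < d)
    (hh : ∀ s : ℝ, 0 < s → ∀ u : X, f (s • u) = s ^ d * f u) : f 0 = 0 := by
  have := hh 2 (by norm_num) 0
  rw [smul_zero] at this
  have h2 : (1:ℝ) < (2:ℝ) ^ d :=
    (Real.one_lt_rpow_iff_of_pos (by norm_num : (0:ℝ) < 2)).2 (Or.inl ⟨one_lt_two, by linarith⟩)
  nlinarith

set_option maxHeartbeats 2000000 in
theorem stmt2 {X : Type*} [NormedAddCommGroup X] [NormedSpace ℝ X]
    (α η β C : ℝ) (hα : 1 < α) (hαη : α < η) (hηβ : η < β) (hC : 0 < C)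
    (N A B : X → ℝ)
    (hNd : Differentiable ℝ N) (hAd : Differentiable ℝ A) (hBd : Differentiable ℝ B)
    (hNh : ∀ s : ℝ, 0 < s → ∀ u : X, N (s • u) = s ^ η * N u)
    (hAh : ∀ s : ℝ, 0 < s → ∀ u : X, A (s • u) = s ^ α * A u)
    (hBh : ∀ s : ℝ, 0 < s → ∀ u : X, B (s • u) = s ^ β * B u)
    (hNlow : ∀ u : X, C⁻¹ * ‖u‖ ^ η ≤ N u)
    (c lam : ℝ) (hc : c < 0) (u : X)
    (hval : N u / η - lam * A u / α - B u / β = c)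
    (hcrit : fderiv ℝ (fun v => N v / η - lam * A v / α - B v / β) u = 0) :
    u ≠ 0 ∧ 0 < lam * A u := by
  have hη0 : (0:ℝ) < η := by linarith
  have hα0 : (0:ℝ) < α := by linarith
  have hβ0 : (0:ℝ) < β := by linarith
  have hu0 : u ≠ 0 := by
    intro h
    rw [h, hom_zero N η (by linarith) hNh, hom_zero A α hα hAh,
      hom_zero B β (by linarith) hBh] at hval
    simp at hval
    linarith
  refine ⟨hu0, ?_⟩
  -- fderiv of Φ equals the combination
  have hD : HasFDerivAt (fun v => N v / η - lam * A v / α - B v / β)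
      ((η⁻¹ • fderiv ℝ N u) - ((lam/α) • fderiv ℝ A u) - (β⁻¹ • fderiv ℝ B u)) u := by
    have hN := (hNd u).hasFDerivAt
    have hA := (hAd u).hasFDerivAt
    have hB := (hBd u).hasFDerivAt
    have h1 : HasFDerivAt (fun v => N v / η) (η⁻¹ • fderiv ℝ N u) u := by
      have h := hN.const_smul η⁻¹
      have he : (η⁻¹ • N) = fun v => N v / η := by
        funext v; rw [Pi.smul_apply, smul_eq_mul]; ring
      rwa [he] at h
    have h2 : HasFDerivAt (fun v => lam * A v / α) ((lam/α) • fderiv ℝ A u) u := by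
      have h := hA.const_smul (lam/α)
      have he : ((lam/α) • A) = fun v => lam * A v / α := by
        funext v; rw [Pi.smul_apply, smul_eq_mul]; ring
      rwa [he] at h
    have h3 : HasFDerivAt (fun v => B v / β) (β⁻¹ • fderiv ℝ B u) u := by
      have h := hB.const_smul β⁻¹
      have he : (β⁻¹ • B) = fun v => B v / β := by
        funext v; rw [Pi.smul_apply, smul_eq_mul]; ring
      rwa [he] at h
    exact (h1.sub h2).sub h3
  have hzero : ((η⁻¹ • fderiv ℝ N u) - ((lam/α) • fderiv ℝ A u) - (β⁻¹ • fderiv ℝ B u)) = 0 := by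
    rw [← hD.fderiv]; exact hcrit
  have happ := congrArg (fun L : X →L[ℝ] ℝ => L u) hzero
  simp only [ContinuousLinearMap.sub_apply, ContinuousLinearMap.smul_apply,
    ContinuousLinearMap.zero_apply, smul_eq_mul] at happ
  rw [euler_id N η hNd hNh u, euler_id A α hAd hAh u, euler_id B β hBd hBh u] at happ
  -- happ : η⁻¹ * (η * N u) - lam/α * (α * A u) - β⁻¹ * (β * B u) = 0
  have hNe : N u - lam * A u - B u = 0 := by
    field_simp at happ
    have h : α * (N u - lam * A u - B u) = 0 := by linear_combination α * happ
    rcases mul_eq_zero.1 h with h' | h'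
    · exact absurd h' (ne_of_gt hα0)
    · exact h'
  have hNpos : 0 < N u := by
    have := hNlow u
    have h2 : (0:ℝ) < ‖u‖ ^ η := Real.rpow_pos_of_pos (norm_pos_iff.2 hu0) η
    have := mul_pos (inv_pos.2 hC) h2
    linarith [hNlow u]
  -- N(1/η - 1/β) + lam*A*(1/β - 1/α) = c
  have key : N u * (1/η - 1/β) + lam * A u * (1/β - 1/α) = c := by
    have hB' : B u = N u - lam * A u := by linarith
    rw [hB'] at hval
    field_simp at hval ⊢
    nlinarith [hval]
  have h1 : 0 < N u * (1/η - 1/β) := by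
    apply mul_pos hNpos
    have : 1/β < 1/η := by
      apply one_div_lt_one_div_of_lt hη0 hηβ
    linarith
  have h2 : lam * A u * (1/β - 1/α) < 0 := by linarith
  have h3 : 1/β - 1/α < 0 := by
    have : 1/β < 1/α := one_div_lt_one_div_of_lt hα0 (by linarith)
    linarith
  by_contra hle
  push_neg at hle
  nlinarith
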